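/- arXiv:2109.08658 — 2 statements merged into one kernel-verified Lean document; each statement's English description precedes it below -/
import Mathlib

section
/- Let (α,β) ∈ ℝ^{d+1} × ℝ^d be a 𝒯-appropriate pair of strictly increasing sequences, and let (π,T) and (π',T') be pairs of a permutation of [d+1] and a plane binary tree with d internal nodes. Then for every w ∈ σ°(π,T) one has ⟨w, v_{π,T}^{(α,β)}⟩ ≥ ⟨w, v_{π',T'}^{(α,β)}⟩, with equality if and only if (π,T) = (π',T'). -/
/-- A plane binary tree: either a leaf or an ordered pair of plane binary trees. -/
inductive PBTree : Type
  | leaf : PBTree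
  | node : PBTree → PBTree → PBTree
  deriving DecidableEq

namespace PBTree

/-- The number of internal nodes of a plane binary tree. -/
def nodes : PBTree → ℕ
  | leaf => 0
  | node l r => nodes l + nodes r + 1

/-- `anc T i j` means that the internal node of `T` with in-order (1-based) label `j`
lies on the path from the internal node labeled `i` to the root (inclusive);
this is the relation `i ≼_T j`. -/
def anc : PBTree → ℕ → ℕ → Prop
  | leaf, _, _ => False
  | node l r, i, j =>
      (j = nodes l + 1 ∧ 1 ≤ i ∧ i ≤ nodes l + nodes r + 1)
      ∨ anc l i j
      ∨ anc r (i - (nodes l + 1)) (j - (nodes l + 1))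

/-- The in-order label of the root of a plane binary tree (`0` for a leaf). -/
def rootLabel : PBTree → ℕ
  | leaf => 0
  | node l _ => nodes l + 1

/-- `childOf T i j` : the internal node of `T` labeled `i` is a child of the internal
node labeled `j` (labels are 1-based, in in-order). -/
def childOf : PBTree → ℕ → ℕ → Prop
  | leaf, _, _ => False
  | node l r, i, j =>
      (j = nodes l + 1 ∧
        ((l ≠ leaf ∧ i = rootLabel l) ∨ (r ≠ leaf ∧ i = nodes l + 1 + rootLabel r)))
      ∨ childOf l i j
      ∨ childOf r (i - (nodes l + 1)) (j - (nodes l + 1))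

/-- The subtree of `T` rooted at the internal node with (1-based, in-order) label `i`
(the result is a leaf if `i` is out of range). -/
def subtreeAt : PBTree → ℕ → PBTree
  | leaf, _ => leaf
  | node l r, i =>
      if i = nodes l + 1 then node l r
      else if i ≤ nodes l then subtreeAt l i
      else subtreeAt r (i - (nodes l + 1))

/-- `val α S := Σ_{k=1}^{t} α_k − Σ_{k=1}^{a} α_k − Σ_{k=1}^{b} α_k` where `t`, `a`, `b` are
the numbers of internal nodes of `S`, of its left subtree and of its right subtree. -/
def val (α : ℕ → ℝ) : PBTree → ℝ
  | leaf => 0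
  | node l r =>
      (∑ k ∈ Finset.Icc 1 (nodes l + nodes r + 1), α k)
        - (∑ k ∈ Finset.Icc 1 (nodes l), α k) - (∑ k ∈ Finset.Icc 1 (nodes r), α k)

end PBTree

/-- The vector `v_T^α ∈ ℝ^n`: its coordinate of (0-based) index `i` is
`val(α, T_(i+1))`, the value of the subtree rooted at the internal node labeled `i+1`. -/
def lodayVec (n : ℕ) (α : ℕ → ℝ) (T : PBTree) : Fin n → ℝ :=
  fun i => PBTree.val α (T.subtreeAt (i.1 + 1))

/-- `D^π_i w := w_{π⁻¹(i+1)} − w_{π⁻¹(i)}` for `i = 1,…,d` (here `i : Fin d`,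
so `i.castSucc` plays the role of `i` and `i.succ` that of `i+1`). -/
def Dpi {d : ℕ} (π : Equiv.Perm (Fin (d + 1))) (i : Fin d) (w : Fin (d + 1) → ℝ) : ℝ :=
  w (π.symm i.succ) - w (π.symm i.castSucc)

/-- `β_{T,i} := val(β, T_(i))`, the value of the subtree of `T` rooted at the internal node
labeled `i`.  (For `i = 0` or `i` out of range this is `0`, which encodes the convention
`β_{T,0} = β_{T,d+1} = 0`.) -/
def betaT (β : ℕ → ℝ) (T : PBTree) (i : ℕ) : ℝ :=
  PBTree.val β (T.subtreeAt i)

/-- The vertex candidate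
`v_{π,T}^{(α,β)} := Σ_{i=1}^{d+1} α_i e_{π⁻¹(i)} + Σ_{i=1}^{d} β_{T,i}(e_{π⁻¹(i+1)} − e_{π⁻¹(i)})`. -/
def vPT (d : ℕ) (α β : ℕ → ℝ) (π : Equiv.Perm (Fin (d + 1))) (T : PBTree) :
    Fin (d + 1) → ℝ :=
  (∑ i : Fin (d + 1), α (i.1 + 1) • (Pi.single (π.symm i) (1 : ℝ) : Fin (d + 1) → ℝ))
    + ∑ i : Fin d, betaT β T (i.1 + 1) •
        ((Pi.single (π.symm i.succ) (1 : ℝ) : Fin (d + 1) → ℝ)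
          - (Pi.single (π.symm i.castSucc) (1 : ℝ) : Fin (d + 1) → ℝ))

/-- The pair `(α, β)` is `𝒯`-appropriate: `α` and `β` are strictly increasing (on the relevant
index windows `[1,d+1]` and `[1,d]`), and for every plane binary tree `T` with `d` internal
nodes the quantities `α_i + β_{T,i−1} − β_{T,i}` are strictly increasing for `i = 1,…,d+1`. -/
def TAppropriate (d : ℕ) (α β : ℕ → ℝ) : Prop :=
  (∀ i j : ℕ, 1 ≤ i → i < j → j ≤ d + 1 → α i < α j) ∧
  (∀ i j : ℕ, 1 ≤ i → i < j → j ≤ d → β i < β j) ∧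
  ∀ T : PBTree, T.nodes = d → ∀ i j : ℕ, 1 ≤ i → i < j → j ≤ d + 1 →
    α i + betaT β T (i - 1) - betaT β T i < α j + betaT β T (j - 1) - betaT β T j

/-- The open part `σ°(π,T)`: all `D^π_i w > 0` and `D^π_i w < D^π_j w` whenever the internal
node labeled `i` is a child of the internal node labeled `j` in `T`. -/
def sigmaPTOpen (d : ℕ) (π : Equiv.Perm (Fin (d + 1))) (T : PBTree) : Set (Fin (d + 1) → ℝ) :=
  {w | (∀ i : Fin d, 0 < Dpi π i w) ∧
    ∀ i j : Fin d, T.childOf (i.1 + 1) (j.1 + 1) → Dpi π i w < Dpi π j w}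

namespace PBTree

def Bsum (β : ℕ → ℝ) (n : ℕ) : ℝ := ∑ k ∈ Finset.Icc 1 n, β k

lemma val_node (β : ℕ → ℝ) (l r : PBTree) :
    val β (node l r) = Bsum β (nodes l + nodes r + 1) - Bsum β (nodes l) - Bsum β (nodes r) := rfl

lemma Bsum_add (β : ℕ → ℝ) (a m : ℕ) :
    Bsum β (a + m) = Bsum β a + ∑ j ∈ Finset.Icc 1 m, β (a + j) := by
  induction m with
  | zero => simp [Bsum]
  | succ m ih =>
      have h1 : Bsum β (a + (m+1)) = Bsum β (a+m) + β (a+m+1) := by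
        rw [show a+(m+1)=(a+m)+1 by ring, Bsum, Finset.sum_Icc_succ_top (by omega), ← Bsum]
      have h2 : ∑ j ∈ Finset.Icc 1 (m+1), β (a+j)
          = (∑ j ∈ Finset.Icc 1 m, β (a+j)) + β (a+(m+1)) :=
        Finset.sum_Icc_succ_top (by omega) _
      rw [h1, h2, ih, show a+(m+1)=a+m+1 by ring]; ring

lemma Bsum_gap (β : ℕ → ℝ) (n a m s : ℕ) (hβ : ∀ i j, 1 ≤ i → i < j → j ≤ n → β i < β j)
    (hm : 1 ≤ m) (hs : 1 ≤ s) (h : a + s + m ≤ n) :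
    Bsum β (a + m) - Bsum β a < Bsum β (a + s + m) - Bsum β (a + s) := by
  rw [Bsum_add β a m, Bsum_add β (a+s) m]
  have : ∑ j ∈ Finset.Icc 1 m, β (a + j) < ∑ j ∈ Finset.Icc 1 m, β (a + s + j) := by
    apply Finset.sum_lt_sum_of_nonempty
    · exact Finset.nonempty_Icc.2 hm
    · intro j hj
      simp only [Finset.mem_Icc] at hj
      exact hβ (a+j) (a+s+j) (by omega) (by omega) (by omega)
  linarith

lemma nodes_eq_zero {T : PBTree} (h : T.nodes = 0) : T = leaf := by
  cases T with
  | leaf => rfl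
  | node l r => simp [nodes] at h

lemma rootLabel_bounds {T : PBTree} (h : T ≠ leaf) :
    1 ≤ T.rootLabel ∧ T.rootLabel ≤ T.nodes := by
  cases T with
  | leaf => exact absurd rfl h
  | node l r => simp only [rootLabel, nodes]; omega

lemma childOf_bounds : ∀ (T : PBTree) (i j : ℕ), T.childOf i j →
    1 ≤ i ∧ i ≤ T.nodes ∧ 1 ≤ j ∧ j ≤ T.nodes := by
  intro T
  induction T with
  | leaf => intro i j h; exact absurd h (by simp [childOf])
  | node l r ihl ihr =>
      intro i j h
      rcases h with ⟨hj, hi⟩ | h | h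
      · rcases hi with ⟨hl, hi⟩ | ⟨hr, hi⟩
        · have := rootLabel_bounds hl
          simp only [nodes]; omega
        · have := rootLabel_bounds hr
          simp only [nodes]; omega
      · have := ihl _ _ h
        simp only [nodes]; omega
      · have := ihr _ _ h
        simp only [nodes]; omega

lemma subtreeAt_of_gt : ∀ (T : PBTree) (k : ℕ), T.nodes < k → T.subtreeAt k = leaf := by
  intro T
  induction T with
  | leaf => intro k _; rfl
  | node l r ihl ihr =>
      intro k hk
      simp only [nodes] at hk
      rw [subtreeAt, if_neg (by omega), if_neg (by omega)]
      exact ihr _ (by omega)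

lemma subtreeAt_zero : ∀ (T : PBTree), T.subtreeAt 0 = leaf := by
  intro T
  induction T with
  | leaf => rfl
  | node l r ihl ihr => rw [subtreeAt, if_neg (by omega), if_pos (by omega)]; exact ihl

/-- the linear functional recursively -/
def F (β x : ℕ → ℝ) : PBTree → ℝ
  | leaf => 0
  | node l r => F β x l
      + (Bsum β (l.nodes + r.nodes + 1) - Bsum β l.nodes - Bsum β r.nodes) * x (l.nodes + 1)
      + F β (fun k => x (k + (l.nodes + 1))) r

lemma F_eq_sum (β : ℕ → ℝ) : ∀ (T : PBTree) (x : ℕ → ℝ),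
    F β x T = ∑ i ∈ Finset.range T.nodes, val β (T.subtreeAt (i+1)) * x (i+1) := by
  intro T
  induction T with
  | leaf => intro x; simp [F, nodes]
  | node l r ihl ihr =>
      intro x
      have hsplit : (Finset.range (nodes (node l r)))
          = Finset.range (l.nodes + 1)
            ∪ (Finset.range r.nodes).map (addLeftEmbedding (l.nodes + 1)) := by
        rw [show nodes (node l r) = (l.nodes + 1) + r.nodes by simp [nodes]; ring]
        exact Finset.range_add _ _
      rw [hsplit, Finset.sum_union]
      · rw [Finset.sum_range_succ, Finset.sum_map]
        have h1 : ∀ i ∈ Finset.range l.nodes,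
            val β ((node l r).subtreeAt (i+1)) * x (i+1)
              = val β (l.subtreeAt (i+1)) * x (i+1) := by
          intro i hi
          simp only [Finset.mem_range] at hi
          rw [subtreeAt, if_neg (by omega), if_pos (by omega)]
        rw [Finset.sum_congr rfl h1]
        have h2 : ∀ i ∈ Finset.range r.nodes,
            val β ((node l r).subtreeAt ((addLeftEmbedding (l.nodes+1)) i + 1))
              * x ((addLeftEmbedding (l.nodes+1)) i + 1)
            = val β (r.subtreeAt (i+1)) * x ((i+1) + (l.nodes+1)) := by
          intro i hi
          have he : (addLeftEmbedding (l.nodes+1)) i = l.nodes + 1 + i := rfl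
          rw [he, subtreeAt, if_neg (by omega), if_neg (by omega)]
          rw [show l.nodes + 1 + i + 1 - (l.nodes + 1) = i + 1 by omega,
            show l.nodes + 1 + i + 1 = (i+1) + (l.nodes+1) by ring]
        rw [Finset.sum_congr rfl h2]
        have h3 : ((node l r).subtreeAt (l.nodes + 1)) = node l r := by
          rw [subtreeAt, if_pos rfl]
        rw [h3, F, ihl, ihr, val_node]
      · rw [Finset.disjoint_left]
        intro i hi him
        simp only [Finset.mem_map, Finset.mem_range] at hi him
        obtain ⟨j, hj, hji⟩ := him
        have : (addLeftEmbedding (l.nodes+1)) j = l.nodes + 1 + j := rfl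
        omega

lemma F_rotR (β x : ℕ → ℝ) (A B C : PBTree) :
    F β x (node A (node B C))
      = F β x (node (node A B) C)
        + (Bsum β (A.nodes+B.nodes+C.nodes+2) + Bsum β B.nodes
            - Bsum β (B.nodes+C.nodes+1) - Bsum β (A.nodes+B.nodes+1))
          * (x (A.nodes+1) - x (A.nodes+B.nodes+2)) := by
  simp only [F, nodes]
  rw [show (fun k => x (k + (B.nodes + 1) + (A.nodes + 1)))
      = (fun k => x (k + (A.nodes + B.nodes + 1 + 1))) from funext fun k => congrArg x (by omega)]
  rw [show B.nodes + 1 + (A.nodes + 1) = A.nodes + B.nodes + 2 from by omega]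
  rw [show A.nodes + (B.nodes + C.nodes + 1) + 1 = A.nodes + B.nodes + C.nodes + 2 from by omega]
  rw [show A.nodes + B.nodes + 1 + C.nodes + 1 = A.nodes + B.nodes + C.nodes + 2 from by omega]
  ring

lemma F_rotL (β x : ℕ → ℝ) (C A B : PBTree) :
    F β x (node (node C A) B)
      = F β x (node C (node A B))
        + (Bsum β (C.nodes+A.nodes+B.nodes+2) + Bsum β A.nodes
            - Bsum β (C.nodes+A.nodes+1) - Bsum β (A.nodes+B.nodes+1))
          * (x (C.nodes+A.nodes+2) - x (C.nodes+1)) := by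
  simp only [F, nodes]
  rw [show (fun k => x (k + (A.nodes + 1) + (C.nodes + 1)))
      = (fun k => x (k + (C.nodes + A.nodes + 1 + 1))) from funext fun k => congrArg x (by omega)]
  rw [show A.nodes + 1 + (C.nodes + 1) = C.nodes + A.nodes + 2 from by omega]
  rw [show C.nodes + (A.nodes + B.nodes + 1) + 1 = C.nodes + A.nodes + B.nodes + 2 from by omega]
  rw [show C.nodes + A.nodes + 1 + B.nodes + 1 = C.nodes + A.nodes + B.nodes + 2 from by omega]
  ring

lemma F_node (β x : ℕ → ℝ) (l r : PBTree) :
    F β x (node l r) = F β x l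
      + (Bsum β (l.nodes + r.nodes + 1) - Bsum β l.nodes - Bsum β r.nodes) * x (l.nodes + 1)
      + F β (fun k => x (k + (l.nodes + 1))) r := rfl

lemma promote (β : ℕ → ℝ) (n : ℕ) (hβ : ∀ i j, 1 ≤ i → i < j → j ≤ n → β i < β j) :
    ∀ (S : PBTree) (x : ℕ → ℝ) (m : ℕ), S.nodes ≤ n → 1 ≤ m → m ≤ S.nodes →
    (∀ k, 1 ≤ k → k ≤ S.nodes → k ≠ m → x k < x m) →
    ∃ S' : PBTree, S'.nodes = S.nodes ∧ S'.rootLabel = m ∧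
      F β x S ≤ F β x S' ∧ (S.rootLabel ≠ m → F β x S < F β x S') := by
  intro S
  induction S with
  | leaf =>
      intro x m h1 h2 h3 _
      simp only [nodes] at h3
      omega
  | node l r ihl ihr =>
      intro x m hSn hm1 hm2 hmax
      simp only [nodes] at hSn hm2 hmax
      by_cases hm : m = l.nodes + 1
      · exact ⟨node l r, rfl, by simp only [rootLabel]; omega, le_refl _,
          fun h => absurd (by simp only [rootLabel]; omega) h⟩
      rcases Nat.lt_or_ge m (l.nodes + 1) with hlt | hge
      · -- m ≤ l.nodes : promote inside the left subtree, then rotate right at the root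
        obtain ⟨l', hl'n, hl'root, hFl, -⟩ := ihl x m (by omega) hm1 (by omega)
          (fun k hk1 hk2 hkm => hmax k hk1 (by omega) hkm)
        cases l' with
        | leaf => simp only [nodes] at hl'n; omega
        | node A B2 =>
          simp only [nodes] at hl'n
          simp only [rootLabel] at hl'root
          have hmono : F β x (node l r) ≤ F β x (node (node A B2) r) := by
            rw [F_node β x l r, F_node β x (node A B2) r]
            simp only [nodes]
            rw [show A.nodes + B2.nodes + 1 = l.nodes from hl'n]
            linarith [hFl]
          have hrot := F_rotR β x A B2 r
          have hgap := Bsum_gap β n B2.nodes (A.nodes+1) (r.nodes+1) hβ (by omega) (by omega)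
            (by omega)
          rw [show B2.nodes + (r.nodes+1) + (A.nodes+1) = A.nodes+B2.nodes+r.nodes+2 from by omega,
            show B2.nodes + (A.nodes+1) = A.nodes+B2.nodes+1 from by omega,
            show B2.nodes + (r.nodes+1) = B2.nodes+r.nodes+1 from by omega] at hgap
          have hx : x (A.nodes+B2.nodes+2) < x (A.nodes+1) := by
            rw [show A.nodes+B2.nodes+2 = l.nodes+1 from by omega,
              show A.nodes+1 = m from by omega]
            exact hmax (l.nodes+1) (by omega) (by omega) (by omega)
          have hstrict : F β x (node (node A B2) r) < F β x (node A (node B2 r)) := by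
            rw [hrot]
            nlinarith [hgap, hx]
          refine ⟨node A (node B2 r), by simp only [nodes]; omega,
            by simp only [rootLabel]; omega, ?_, fun _ => ?_⟩
          · exact le_of_lt (lt_of_le_of_lt hmono hstrict)
          · exact lt_of_le_of_lt hmono hstrict
      · -- m ≥ l.nodes + 2 : promote inside the right subtree, then rotate left at the root
        obtain ⟨r', hr'n, hr'root, hFr, -⟩ := ihr (fun k => x (k + (l.nodes + 1)))
          (m - (l.nodes + 1)) (by omega) (by omega) (by omega)
          (fun k hk1 hk2 hkm => by
            have h := hmax (k + (l.nodes+1)) (by omega) (by omega) (by omega)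
            rw [show m = m - (l.nodes+1) + (l.nodes+1) from by omega] at h
            exact h)
        cases r' with
        | leaf => simp only [nodes] at hr'n; omega
        | node A B2 =>
          simp only [nodes] at hr'n
          simp only [rootLabel] at hr'root
          have hmono : F β x (node l r) ≤ F β x (node l (node A B2)) := by
            rw [F_node β x l r, F_node β x l (node A B2)]
            simp only [nodes]
            rw [show A.nodes + B2.nodes + 1 = r.nodes from hr'n]
            linarith [hFr]
          have hrot := F_rotL β x l A B2
          have hgap := Bsum_gap β n A.nodes (B2.nodes+1) (l.nodes+1) hβ (by omega) (by omega)
            (by omega)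
          rw [show A.nodes + (l.nodes+1) + (B2.nodes+1) = l.nodes+A.nodes+B2.nodes+2 from by omega,
            show A.nodes + (B2.nodes+1) = A.nodes+B2.nodes+1 from by omega,
            show A.nodes + (l.nodes+1) = l.nodes+A.nodes+1 from by omega] at hgap
          have hx : x (l.nodes+1) < x (l.nodes+A.nodes+2) := by
            rw [show l.nodes+A.nodes+2 = m from by omega]
            exact hmax (l.nodes+1) (by omega) (by omega) (by omega)
          have hstrict : F β x (node l (node A B2)) < F β x (node (node l A) B2) := by
            rw [hrot]
            nlinarith [hgap, hx]
          refine ⟨node (node l A) B2, by simp only [nodes]; omega,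
            by simp only [rootLabel, nodes]; omega, ?_, fun _ => ?_⟩
          · exact le_of_lt (lt_of_le_of_lt hmono hstrict)
          · exact lt_of_le_of_lt hmono hstrict

lemma root_max : ∀ (T : PBTree) (x : ℕ → ℝ), (∀ i j, T.childOf i j → x i < x j) →
    ∀ k, 1 ≤ k → k ≤ T.nodes → k ≠ T.rootLabel → x k < x T.rootLabel := by
  intro T
  induction T with
  | leaf => intro x _ k _ hk2 _; simp only [nodes] at hk2; omega
  | node l r ihl ihr =>
      intro x hx k hk1 hk2 hkr
      simp only [nodes] at hk2
      simp only [rootLabel] at hkr ⊢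
      rcases Nat.lt_or_ge k (l.nodes + 1) with hlt | hge
      · -- k in the left subtree
        have hlne : l ≠ leaf := by
          intro h; rw [h] at hlt; simp only [nodes] at hlt; omega
        have hchild : childOf (node l r) l.rootLabel (l.nodes + 1) :=
          Or.inl ⟨rfl, Or.inl ⟨hlne, rfl⟩⟩
        by_cases hkl : k = l.rootLabel
        · rw [hkl]; exact hx _ _ hchild
        · exact lt_trans
            (ihl x (fun i j h => hx i j (Or.inr (Or.inl h))) k hk1 (by omega) hkl)
            (hx _ _ hchild)
      · -- k in the right subtree
        have hrne : r ≠ leaf := by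
          intro h; rw [h] at hk2; simp only [nodes] at hk2; omega
        have hchild : childOf (node l r) (l.nodes + 1 + r.rootLabel) (l.nodes + 1) :=
          Or.inl ⟨rfl, Or.inr ⟨hrne, rfl⟩⟩
        have hx' : ∀ i j, r.childOf i j →
            (fun k => x (k + (l.nodes + 1))) i < (fun k => x (k + (l.nodes + 1))) j := by
          intro i j h
          have hb := childOf_bounds r i j h
          have : childOf (node l r) (i + (l.nodes+1)) (j + (l.nodes+1)) := by
            refine Or.inr (Or.inr ?_)
            rw [show i + (l.nodes+1) - (l.nodes+1) = i from by omega,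
              show j + (l.nodes+1) - (l.nodes+1) = j from by omega]
            exact h
          exact hx _ _ this
        by_cases hkl : k - (l.nodes + 1) = r.rootLabel
        · rw [show k = l.nodes + 1 + r.rootLabel from by
            have := (rootLabel_bounds hrne).1; omega]
          exact hx _ _ hchild
        · have h1 := ihr (fun k => x (k + (l.nodes + 1))) hx' (k - (l.nodes+1))
            (by omega) (by omega) hkl
          rw [show k - (l.nodes+1) + (l.nodes+1) = k from by omega] at h1
          refine lt_trans h1 ?_
          rw [show r.rootLabel + (l.nodes+1) = l.nodes + 1 + r.rootLabel from by omega]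
          exact hx _ _ hchild

lemma tree_opt (β : ℕ → ℝ) : ∀ (T T' : PBTree) (x : ℕ → ℝ),
    T'.nodes = T.nodes →
    (∀ i j, 1 ≤ i → i < j → j ≤ T.nodes → β i < β j) →
    (∀ i j, T.childOf i j → x i < x j) →
    F β x T' ≤ F β x T ∧ (F β x T' = F β x T ↔ T' = T) := by
  intro T
  induction T with
  | leaf =>
      intro T' x hn _ _
      simp only [nodes] at hn
      rw [nodes_eq_zero hn]
      exact ⟨le_refl _, iff_of_true rfl rfl⟩
  | node l r ihl ihr =>
      intro T' x hn hβ hx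
      have hmax := root_max (node l r) x hx
      simp only [rootLabel, nodes] at hmax
      have hβl : ∀ i j, 1 ≤ i → i < j → j ≤ l.nodes → β i < β j := by
        intro i j h1 h2 h3; exact hβ i j h1 h2 (by simp only [nodes]; omega)
      have hβr : ∀ i j, 1 ≤ i → i < j → j ≤ r.nodes → β i < β j := by
        intro i j h1 h2 h3; exact hβ i j h1 h2 (by simp only [nodes]; omega)
      have hxl : ∀ i j, l.childOf i j → x i < x j :=
        fun i j h => hx i j (Or.inr (Or.inl h))
      have hxr : ∀ i j, r.childOf i j →
          (fun k => x (k + (l.nodes + 1))) i < (fun k => x (k + (l.nodes + 1))) j := by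
        intro i j h
        have hb := childOf_bounds r i j h
        refine hx _ _ (Or.inr (Or.inr ?_))
        rw [show i + (l.nodes+1) - (l.nodes+1) = i from by omega,
          show j + (l.nodes+1) - (l.nodes+1) = j from by omega]
        exact h
      -- key: any competitor whose root label matches that of `node l r`
      have key : ∀ T'' : PBTree, T''.nodes = (node l r).nodes →
          T''.rootLabel = l.nodes + 1 →
          F β x T'' ≤ F β x (node l r) ∧ (F β x T'' = F β x (node l r) ↔ T'' = node l r) := by
        intro T'' hn'' hroot''
        cases T'' with
        | leaf => simp only [nodes] at hn''; omega
        | node l'' r'' =>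
          simp only [nodes] at hn''
          simp only [rootLabel] at hroot''
          have hl'' : l''.nodes = l.nodes := by omega
          have hr'' : r''.nodes = r.nodes := by omega
          obtain ⟨hle1, hiff1⟩ := ihl l'' x hl'' hβl hxl
          obtain ⟨hle2, hiff2⟩ := ihr r'' (fun k => x (k + (l.nodes + 1))) hr'' hβr hxr
          rw [F_node β x l'' r'', F_node β x l r, hl'', hr'']
          constructor
          · linarith
          · constructor
            · intro h
              have e1 : F β x l'' = F β x l := by linarith
              have e2 : F β (fun k => x (k + (l.nodes + 1))) r''
                  = F β (fun k => x (k + (l.nodes + 1))) r := by linarith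
              rw [hiff1.1 e1, hiff2.1 e2]
            · intro h
              injection h with h1 h2
              rw [h1, h2]
      by_cases hroot : T'.rootLabel = l.nodes + 1
      · exact key T' hn hroot
      · obtain ⟨T'', hTn, hTroot, -, hstrict⟩ := promote β (node l r).nodes
          (by intro i j a b c; exact hβ i j a b c) T' x (l.nodes + 1)
          (le_of_eq hn) (by omega) (by rw [hn]; simp only [nodes]; omega)
          (by
            intro k hk1 hk2 hkm
            rw [hn] at hk2
            simp only [nodes] at hk2
            exact hmax k hk1 hk2 hkm)
        have h1 : F β x T' < F β x T'' := hstrict hroot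
        have h2 : F β x T'' ≤ F β x (node l r) := (key T'' (hTn.trans hn) hTroot).1
        constructor
        · linarith
        · refine iff_of_false (by linarith) ?_
          intro h
          rw [h] at hroot
          simp only [rootLabel] at hroot
          exact hroot trivial

end PBTree

lemma betaT_zero' (β : ℕ → ℝ) (T : PBTree) : PBTree.val β (T.subtreeAt 0) = 0 := by
  rw [PBTree.subtreeAt_zero]; rfl

lemma betaT_top' (β : ℕ → ℝ) (T : PBTree) (k : ℕ) (h : T.nodes < k) :
    PBTree.val β (T.subtreeAt k) = 0 := by
  rw [PBTree.subtreeAt_of_gt _ _ h]; rfl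


lemma telescope (d : ℕ) (c W : ℕ → ℝ) (h0 : c 0 = 0) (htop : c (d+1) = 0) :
    ∑ j ∈ Finset.range d, c (j+1) * (W (j+1) - W j)
      = ∑ j ∈ Finset.range (d+1), (c j - c (j+1)) * W j := by
  have e1 : ∑ j ∈ Finset.range (d+1), c j * W j
      = (∑ j ∈ Finset.range d, c (j+1) * W (j+1)) + c 0 * W 0 := Finset.sum_range_succ' _ d
  have e2 : ∑ j ∈ Finset.range (d+1), c (j+1) * W j
      = (∑ j ∈ Finset.range d, c (j+1) * W j) + c (d+1) * W d := Finset.sum_range_succ _ d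
  rw [h0, zero_mul, add_zero] at e1
  rw [htop, zero_mul, add_zero] at e2
  simp only [mul_sub, sub_mul, Finset.sum_sub_distrib]
  rw [← e1, ← e2]

lemma inner_vPT (d : ℕ) (α β : ℕ → ℝ) (π' : Equiv.Perm (Fin (d+1))) (T' : PBTree)
    (w : Fin (d+1) → ℝ) :
    (∑ i, w i * vPT d α β π' T' i)
      = (∑ k : Fin (d+1), α (k.1+1) * w (π'.symm k))
        + ∑ i : Fin d, betaT β T' (i.1+1) * Dpi π' i w := by
  have hsingle : ∀ (j : Fin (d+1)),
      (∑ i, w i * (Pi.single j (1:ℝ) : Fin (d+1) → ℝ) i) = w j := by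
    intro j
    simp [Pi.single_apply, mul_ite]
  unfold vPT Dpi
  simp only [Pi.add_apply, Finset.sum_apply, Pi.smul_apply, Pi.sub_apply, smul_eq_mul, mul_add]
  rw [Finset.sum_add_distrib]
  congr 1
  · simp only [Finset.mul_sum]
    rw [Finset.sum_comm]
    refine Finset.sum_congr rfl fun k _ => ?_
    rw [← hsingle (π'.symm k), Finset.mul_sum]
    refine Finset.sum_congr rfl fun i _ => ?_
    ring
  · simp only [Finset.mul_sum]
    rw [Finset.sum_comm]
    refine Finset.sum_congr rfl fun k _ => ?_
    have : ∑ i, w i * (betaT β T' (k.1+1) *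
        ((Pi.single (π'.symm k.succ) (1:ℝ) : Fin (d+1) → ℝ) i
          - (Pi.single (π'.symm k.castSucc) (1:ℝ) : Fin (d+1) → ℝ) i))
        = betaT β T' (k.1+1)
          * ((∑ i, w i * (Pi.single (π'.symm k.succ) (1:ℝ) : Fin (d+1) → ℝ) i)
          - (∑ i, w i * (Pi.single (π'.symm k.castSucc) (1:ℝ) : Fin (d+1) → ℝ) i)) := by
      rw [mul_sub, Finset.mul_sum, Finset.mul_sum, ← Finset.sum_sub_distrib]
      refine Finset.sum_congr rfl fun i _ => by ring
    rw [this, hsingle, hsingle]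

lemma strictMono_le_apply {n : ℕ} (f : Fin n → Fin n) (h : StrictMono f) :
    ∀ k, k ≤ f k := by
  have : ∀ (v : ℕ) (hv : v < n), (⟨v, hv⟩ : Fin n) ≤ f ⟨v, hv⟩ := by
    intro v
    induction v with
    | zero => intro hv; simp [Fin.le_def]
    | succ v ih =>
        intro hv
        have hv' : v < n := by omega
        have h1 : f ⟨v, hv'⟩ < f ⟨v+1, hv⟩ := h (by simp [Fin.lt_def])
        have h2 := ih hv'
        rw [Fin.le_def] at h2 ⊢
        rw [Fin.lt_def] at h1
        simp only at *
        omega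
  intro k
  rcases k with ⟨v, hv⟩
  exact this v hv

lemma perm_eq_one_of_strictMono {n : ℕ} (σ : Equiv.Perm (Fin n)) (h : StrictMono (⇑σ)) :
    σ = 1 := by
  have hsymm : StrictMono (⇑σ.symm) := by
    intro i j hij
    rcases lt_trichotomy (σ.symm i) (σ.symm j) with h1|h1|h1
    · exact h1
    · exact absurd (congrArg σ h1)
        (by simpa [Equiv.apply_symm_apply] using ne_of_lt hij)
    · have h3 := h h1
      rw [Equiv.apply_symm_apply, Equiv.apply_symm_apply] at h3
      exact absurd h3 (not_lt.2 (le_of_lt hij))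
  have h1 := strictMono_le_apply _ h
  have h2 := strictMono_le_apply _ hsymm
  refine Equiv.ext fun k => le_antisymm ?_ (h1 k)
  have h3 := h2 (σ k)
  rwa [Equiv.symm_apply_apply] at h3

lemma inner_eq (d : ℕ) (α β : ℕ → ℝ) (π' : Equiv.Perm (Fin (d+1))) (T' : PBTree)
    (hT' : T'.nodes = d) (w : Fin (d+1) → ℝ) :
    (∑ i, w i * vPT d α β π' T' i)
      = ∑ k : Fin (d+1), (α (k.1+1) + betaT β T' k.1 - betaT β T' (k.1+1)) * w (π'.symm k) := by
  classical
  set W : ℕ → ℝ := fun j => if h : j < d+1 then w (π'.symm ⟨j, h⟩) else 0 with hW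
  have hWk : ∀ k : Fin (d+1), W k.1 = w (π'.symm k) := by
    intro k; simp only [hW]; rw [dif_pos k.isLt]
  have hWsucc : ∀ i : Fin d, W (i.1+1) = w (π'.symm i.succ) := by
    intro i; simp only [hW]; rw [dif_pos (by omega : i.1+1 < d+1)]; rfl
  have hWcast : ∀ i : Fin d, W i.1 = w (π'.symm i.castSucc) := by
    intro i; simp only [hW]; rw [dif_pos (by omega : i.1 < d+1)]; rfl
  rw [inner_vPT]
  have h1 : ∑ i : Fin d, betaT β T' (i.1+1) * Dpi π' i w
      = ∑ j ∈ Finset.range d, betaT β T' (j+1) * (W (j+1) - W j) := by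
    rw [← Fin.sum_univ_eq_sum_range (fun j => betaT β T' (j+1) * (W (j+1) - W j)) d]
    exact Finset.sum_congr rfl fun i _ => by rw [Dpi, hWsucc, hWcast]
  rw [h1, telescope d (betaT β T') W (betaT_zero' β T')
    (betaT_top' β T' (d+1) (by omega))]
  rw [← Fin.sum_univ_eq_sum_range (fun j => (betaT β T' j - betaT β T' (j+1)) * W j) (d+1)]
  rw [← Finset.sum_add_distrib]
  exact Finset.sum_congr rfl fun k _ => by rw [hWk]; ring

lemma beta_part_eq_F (d : ℕ) (β : ℕ → ℝ) (π : Equiv.Perm (Fin (d+1))) (T' : PBTree)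
    (hT' : T'.nodes = d) (w : Fin (d+1) → ℝ) :
    ∑ i : Fin d, betaT β T' (i.1+1) * Dpi π i w
      = PBTree.F β (fun i => if h : 1 ≤ i ∧ i ≤ d then Dpi π ⟨i-1, by omega⟩ w else 0) T' := by
  rw [PBTree.F_eq_sum, hT']
  rw [← Fin.sum_univ_eq_sum_range (fun j => PBTree.val β (T'.subtreeAt (j+1))
    * (if h : 1 ≤ j+1 ∧ j+1 ≤ d then Dpi π ⟨j+1-1, by omega⟩ w else 0)) d]
  refine Finset.sum_congr rfl fun i _ => ?_
  rw [dif_pos ⟨by omega, by omega⟩]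
  simp only [betaT]
  congr 1

/-- Lemma 6.6: for a `𝒯`-appropriate pair `(α,β)` and every `w ∈ σ°(π,T)` one has
`⟨w, v_{π',T'}^{(α,β)}⟩ ≤ ⟨w, v_{π,T}^{(α,β)}⟩`, with equality iff `(π,T) = (π',T')`. -/
theorem nested_vertex_maximizes (d : ℕ) (α β : ℕ → ℝ) (happ : TAppropriate d α β)
    (π π' : Equiv.Perm (Fin (d + 1))) (T T' : PBTree)
    (hT : T.nodes = d) (hT' : T'.nodes = d)
    (w : Fin (d + 1) → ℝ) (hw : w ∈ sigmaPTOpen d π T) :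
    (∑ i, w i * vPT d α β π' T' i) ≤ (∑ i, w i * vPT d α β π T i) ∧
    ((∑ i, w i * vPT d α β π T i) = (∑ i, w i * vPT d α β π' T' i) ↔ π = π' ∧ T = T') := by
  classical
  obtain ⟨hα, hβ, hγ⟩ := happ
  obtain ⟨hw1, hw2⟩ := hw
  -- the increasing rearrangement of w
  set u : Fin (d+1) → ℝ := fun k => w (π.symm k) with hu_def
  have hu : StrictMono u := by
    rw [Fin.strictMono_iff_lt_succ]
    intro i
    have h := hw1 i
    rw [Dpi] at h
    simp only [hu_def]
    linarith
  -- the coefficient sequence attached to T'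
  set γ' : Fin (d+1) → ℝ :=
    fun k => α (k.1+1) + betaT β T' k.1 - betaT β T' (k.1+1) with hγ'_def
  have hγ'mono : StrictMono γ' := by
    intro k k' hkk
    have h := hγ T' hT' (k.1+1) (k'.1+1) (by omega) (by
      have := Fin.lt_def.1 hkk; omega) (by omega)
    rw [Nat.add_sub_cancel, Nat.add_sub_cancel] at h
    exact h
  set σ : Equiv.Perm (Fin (d+1)) := π'.symm.trans π with hσ_def
  have hσu : ∀ k, w (π'.symm k) = u (σ k) := by
    intro k
    simp only [hu_def, hσ_def, Equiv.trans_apply, Equiv.symm_apply_apply]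
  have hmono : Monovary γ' u := fun i j h =>
    (hγ'mono.le_iff_le).2 ((hu.lt_iff_lt).1 h).le
  have hA : (∑ i, w i * vPT d α β π' T' i) = ∑ k, γ' k * u (σ k) := by
    rw [inner_eq d α β π' T' hT' w]
    exact Finset.sum_congr rfl fun k _ => by rw [hσu]
  have hB : (∑ i, w i * vPT d α β π T' i) = ∑ k, γ' k * u k := by
    rw [inner_eq d α β π T' hT' w]
  have step1 : (∑ i, w i * vPT d α β π' T' i) ≤ (∑ i, w i * vPT d α β π T' i) := by
    rw [hA, hB]
    exact hmono.sum_mul_comp_perm_le_sum_mul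
  have step1eq : (∑ i, w i * vPT d α β π' T' i) = (∑ i, w i * vPT d α β π T' i) ↔ π = π' := by
    rw [hA, hB, hmono.sum_mul_comp_perm_eq_sum_mul_iff]
    constructor
    · intro hM
      have hσmono : StrictMono (⇑σ) := by
        intro i j hij
        rcases lt_trichotomy (σ i) (σ j) with h|h|h
        · exact h
        · exact absurd (σ.injective h) (ne_of_lt hij)
        · exact absurd (hM (hu h)) (not_le.2 (hγ'mono hij))
      have hσ1 : σ = 1 := perm_eq_one_of_strictMono σ hσmono
      have h1 : ∀ k, π (π'.symm k) = k := by
        intro k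
        have := Equiv.ext_iff.1 hσ1 k
        simpa [hσ_def] using this
      refine Equiv.ext fun k => ?_
      have h2 := h1 (π' k)
      rwa [Equiv.symm_apply_apply] at h2
    · intro h
      have hid : (u ∘ ⇑σ) = u := by
        funext k
        simp only [Function.comp_apply, hσ_def, h, Equiv.trans_apply,
          Equiv.apply_symm_apply]
      rw [hid]
      exact hmono
  -- the tree part
  set x : ℕ → ℝ := fun i => if h : 1 ≤ i ∧ i ≤ d then Dpi π ⟨i-1, by omega⟩ w else 0
    with hx_def
  have hxc : ∀ i j, T.childOf i j → x i < x j := by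
    intro i j hc
    have hb := PBTree.childOf_bounds T i j hc
    rw [hT] at hb
    have hcc : T.childOf ((⟨i-1, by omega⟩ : Fin d).1 + 1) ((⟨j-1, by omega⟩ : Fin d).1 + 1) := by
      simp only
      rw [show i - 1 + 1 = i from by omega, show j - 1 + 1 = j from by omega]
      exact hc
    have h := hw2 ⟨i-1, by omega⟩ ⟨j-1, by omega⟩ hcc
    simp only [hx_def]
    rw [dif_pos ⟨hb.1, hb.2.1⟩, dif_pos ⟨hb.2.2.1, hb.2.2.2⟩]
    exact h
  obtain ⟨htle, htiff⟩ := PBTree.tree_opt β T T' x (hT'.trans hT.symm)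
    (fun i j h1 h2 h3 => hβ i j h1 h2 (by rw [hT] at h3; exact h3)) hxc
  have hB2 : (∑ i, w i * vPT d α β π T' i)
      = (∑ k : Fin (d+1), α (k.1+1) * w (π.symm k)) + PBTree.F β x T' := by
    rw [inner_vPT, beta_part_eq_F d β π T' hT' w]
  have hC2 : (∑ i, w i * vPT d α β π T i)
      = (∑ k : Fin (d+1), α (k.1+1) * w (π.symm k)) + PBTree.F β x T := by
    rw [inner_vPT, beta_part_eq_F d β π T hT w]
  have step2 : (∑ i, w i * vPT d α β π T' i) ≤ (∑ i, w i * vPT d α β π T i) := by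
    rw [hB2, hC2]; linarith
  have step2eq : (∑ i, w i * vPT d α β π T' i) = (∑ i, w i * vPT d α β π T i) ↔ T' = T := by
    rw [hB2, hC2]
    constructor
    · intro h
      exact htiff.1 (by linarith)
    · intro h
      rw [h]
  refine ⟨le_trans step1 step2, ?_, ?_⟩
  · intro h
    have e1 : (∑ i, w i * vPT d α β π' T' i) = (∑ i, w i * vPT d α β π T' i) := by
      have := step2
      linarith [step1, step2]
    have e2 : (∑ i, w i * vPT d α β π T' i) = (∑ i, w i * vPT d α β π T i) := by
      linarith [step1]
    exact ⟨step1eq.1 e1, (step2eq.1 e2).symm⟩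
  · rintro ⟨h1, h2⟩
    rw [h1, h2]
end

section
/- Let b : [d+1] → [k] be a surjection with k ≥ 2. Then the cone { w ∈ ℝ^{d+1} : w_i = w_j whenever b(i) = b(j); w_i ≤ w_j whenever b(j) = b(i) + 1; and w_j − w_i = w_q − w_p whenever b(j) = b(i) + 1 and b(q) = b(p) + 1 } equals { λ·u + μ·𝟙 : λ ≥ 0, μ ∈ ℝ }, where u ∈ ℝ^{d+1} is the vector with j-th coordinate b(j) and 𝟙 = (1,…,1) ∈ ℝ^{d+1}. -/
/-- Part of Lemma 5.21 (2): for an ordered set partition of `[d+1]` with `k ≥ 2` blocks,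
encoded by a surjection `b : [d+1] → [k]` (the block index of `j` being `(b j) + 1`), the cone
of vectors `w` that are constant on each block, weakly increasing from each block to the next,
and with all consecutive increments equal, is exactly `{λ u + μ 𝟙 : λ ≥ 0, μ ∈ ℝ}` where `u`
is the vector whose `j`-th coordinate is the block index of `j`. -/
theorem ray_of_ordered_set_partition (d k : ℕ) (hk : 2 ≤ k)
    (b : Fin (d + 1) → Fin k) (hb : Function.Surjective b) :
    {w : Fin (d + 1) → ℝ |
        (∀ i j, b i = b j → w i = w j) ∧
        (∀ i j, (b j).1 = (b i).1 + 1 → w i ≤ w j) ∧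
        (∀ i j p q, (b j).1 = (b i).1 + 1 → (b q).1 = (b p).1 + 1 →
          w j - w i = w q - w p)}
      = {w | ∃ l : ℝ, 0 ≤ l ∧ ∃ m : ℝ,
          w = fun j => l * (((b j).1 + 1 : ℕ) : ℝ) + m} := by
  ext w
  simp only [Set.mem_setOf_eq]
  constructor
  · rintro ⟨h1, h2, h3⟩
    obtain ⟨i0, hi0⟩ := hb ⟨0, by omega⟩
    obtain ⟨j1, hj1⟩ := hb ⟨1, by omega⟩
    set l := w j1 - w i0 with hl
    have hstep : (b j1).1 = (b i0).1 + 1 := by rw [hi0, hj1]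
    have hl0 : 0 ≤ l := by have := h2 i0 j1 hstep; simp [hl]; linarith
    have key : ∀ n, ∀ j, (b j).1 = n → w j = w i0 + n * l := by
      intro n
      induction n with
      | zero =>
        intro j hj
        have hbij : b j = b i0 := by
          apply Fin.ext; rw [hj, hi0]
        rw [h1 j i0 hbij]; simp
      | succ n ih =>
        intro j hj
        obtain ⟨i, hi⟩ := hb ⟨n, by have := (b j).2; omega⟩
        have hbn : (b i).1 = n := by rw [hi]
        have := h3 i j i0 j1 (by omega) hstep
        have hwi := ih i hbn
        push_cast
        linarith
    refine ⟨l, hl0, w i0 - l, ?_⟩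
    funext j
    have := key (b j).1 j rfl
    push_cast
    linarith
  · rintro ⟨l, hl, m, rfl⟩
    refine ⟨?_, ?_, ?_⟩
    · intro i j hij; simp only [hij]
    · intro i j hij
      simp only
      push_cast [hij]
      nlinarith
    · intro i j p q hA hB
      simp only
      push_cast [hA, hB]
      ring
end
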